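/- Let T be a power partial isometry on a Hilbert space H. Then a vector h satisfies Th = 0 and T*h = 0 if and only if (1 - TT*)(1 - T*T)h = h. In other words, ker T ∩ ker T* equals the range of the projection (1 - TT*)(1 - T*T). -/

import Mathlib

open ContinuousLinearMap

private lemma aux_norm_sub {H : Type*} [NormedAddCommGroup H] [InnerProductSpace ℂ H]
    [CompleteSpace H] (T : H →L[ℂ] H) (h1 : T * adjoint T * T = T) (x : H) :
    ‖x - adjoint T (T x)‖ ^ 2 = ‖x‖ ^ 2 - ‖T x‖ ^ 2 := by
  have h2 : RCLike.re (inner ℂ x (adjoint T (T x)) : ℂ) = ‖T x‖ ^ 2 := by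
    rw [adjoint_inner_right, @inner_self_eq_norm_sq ℂ]
  have h3 : ‖adjoint T (T x)‖ ^ 2 = ‖T x‖ ^ 2 := by
    have hTx : T (adjoint T (T x)) = T x := by
      have := congrArg (fun S : H →L[ℂ] H => S x) h1
      simpa [mul_apply] using this
    rw [← @inner_self_eq_norm_sq ℂ _ _ _ _ (adjoint T (T x)), adjoint_inner_left, hTx,
      @inner_self_eq_norm_sq ℂ]
  rw [@norm_sub_sq ℂ, h2, h3]
  ring

/-- For a power partial isometry `T`, a vector `h` satisfies `T h = 0` and `T* h = 0`
if and only if `(1 - TT*)(1 - T*T) h = h`. -/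
theorem ker_inter_ker_adjoint_eq_range_proj
    {H : Type*} [NormedAddCommGroup H] [InnerProductSpace ℂ H] [CompleteSpace H]
    (T : H →L[ℂ] H)
    (hT : ∀ n : ℕ, T ^ n * (adjoint T) ^ n * T ^ n = T ^ n) :
    ∀ h : H, (T h = 0 ∧ adjoint T h = 0) ↔
      ((1 - T * adjoint T) * (1 - adjoint T * T)) h = h := by
  have h1 : T * adjoint T * T = T := by simpa [pow_one] using hT 1
  have h1' : adjoint T * T * adjoint T = adjoint T := by
    have := congrArg star h1
    simpa [star_eq_adjoint, star_mul, mul_assoc] using this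
  intro h
  constructor
  · rintro ⟨hTh, hTsh⟩
    simp only [mul_apply_eq_comp, _root_.sub_apply, one_apply_eq_self, hTh, hTsh, map_zero, sub_zero]
  · intro heq
    have heq' : (h - adjoint T (T h)) - T (adjoint T (h - adjoint T (T h))) = h := by
      simpa only [mul_apply_eq_comp, _root_.sub_apply, one_apply_eq_self] using heq
    set u := h - adjoint T (T h) with hu
    have e1 : ‖u‖ ^ 2 = ‖h‖ ^ 2 - ‖T h‖ ^ 2 := aux_norm_sub T h1 h
    have h1'' : adjoint T * adjoint (adjoint T) * adjoint T = adjoint T := by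
      rw [adjoint_adjoint]; exact h1'
    have e2 := aux_norm_sub (adjoint T) h1'' u
    rw [adjoint_adjoint] at e2
    rw [heq'] at e2
    have hTh0 : ‖T h‖ ^ 2 = 0 := by
      nlinarith [sq_nonneg ‖T h‖, sq_nonneg ‖adjoint T u‖]
    have hTh : T h = 0 := norm_eq_zero.mp (sq_eq_zero_iff.mp hTh0)
    have huh : u = h := by simp [hu, hTh]
    have hTTsh : T (adjoint T h) = 0 := by
      rw [huh] at heq'
      exact sub_eq_self.mp heq'
    have hTsh : adjoint T h = 0 := by
      have h0 : RCLike.re (inner ℂ (adjoint T h) (adjoint T h) : ℂ) = 0 := by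
        rw [adjoint_inner_left, hTTsh, inner_zero_right]; simp
      rw [@inner_self_eq_norm_sq ℂ] at h0
      exact norm_eq_zero.mp (sq_eq_zero_iff.mp h0)
    exact ⟨hTh, hTsh⟩
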